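/- Let ρ > 1 and let f : ℂ → ℂ be analytic on the closed interior of the Bernstein ellipse E_ρ with |f(z)| ≤ M for all z in that closed region. Let a_j be the Chebyshev coefficients of the restriction of f to [−1,1]. Then for every n ≥ 0 and every x ∈ [−1,1], |f(x) − Σ_{j=0}^{n} a_j T_j(x)| ≤ 2 M ρ^{−n} / (ρ − 1). -/

import Mathlib

open Complex Polynomial

/-- The closed interior of the Bernstein ellipse `E_ρ`:
`{(r e^{iθ} + r⁻¹ e^{-iθ})/2 : 1 ≤ r ≤ ρ, θ ∈ ℝ}`. -/
noncomputable def bernsteinClosed (ρ : ℝ) : Set ℂ :=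
  {z | ∃ r θ : ℝ, 1 ≤ r ∧ r ≤ ρ ∧
    z = ((r : ℂ) * Complex.exp (θ * Complex.I) +
          (r : ℂ)⁻¹ * Complex.exp (-θ * Complex.I)) / 2}

/-- The Chebyshev coefficients of (the restriction to `[-1,1]` of) `f : ℂ → ℂ`:
`a₀ = (1/π)∫₀^π f(cos θ) dθ` and `aⱼ = (2/π)∫₀^π f(cos θ) cos(jθ) dθ` for `j ≥ 1`. -/
noncomputable def chebCoeff (f : ℂ → ℂ) : ℕ → ℂ
  | 0 => ((1 / Real.pi : ℝ) : ℂ) * ∫ θ in (0:ℝ)..Real.pi, f ((Real.cos θ : ℝ) : ℂ)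
  | (j + 1) => ((2 / Real.pi : ℝ) : ℂ) *
      ∫ θ in (0:ℝ)..Real.pi, f ((Real.cos θ : ℝ) : ℂ) * ((Real.cos ((j + 1) * θ) : ℝ) : ℂ)

lemma memB (ρ : ℝ) (w : ℂ) (h1 : 1 ≤ ‖w‖) (h2 : ‖w‖ ≤ ρ) :
    (w + w⁻¹)/2 ∈ bernsteinClosed ρ := by
  refine ⟨‖w‖, Complex.arg w, h1, h2, ?_⟩
  have hw : (‖w‖ : ℂ) * Complex.exp (Complex.arg w * I) = w :=
    Complex.norm_mul_exp_arg_mul_I w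
  have hinv : w⁻¹ = (‖w‖ : ℂ)⁻¹ * Complex.exp (-(w.arg) * I) := by
    conv_lhs => rw [← hw]
    rw [mul_inv, ← Complex.exp_neg, neg_mul]
  rw [hinv, hw]

lemma circleInt_eval (Fc : ℂ → ℂ) (j : ℤ) (r : ℝ) (hr : 0 < r) :
    (∮ z in C(0, r), Fc z * z ^ (-(j+1))) =
    (I * (r:ℂ) ^ (-j)) * ∫ θ in (0:ℝ)..2*Real.pi,
      Fc ((r:ℂ) * Complex.exp (θ*I)) * Complex.exp (-(j*θ)*I) := by
  rw [circleIntegral, ← intervalIntegral.integral_const_mul]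
  refine intervalIntegral.integral_congr fun θ _ => ?_
  have hrc : (r:ℂ) ≠ 0 := Complex.ofReal_ne_zero.mpr hr.ne'
  have hre : circleMap 0 r θ = (r:ℂ) * Complex.exp (θ*I) := by simp [circleMap]
  have he : Complex.exp (θ*I) ≠ 0 := Complex.exp_ne_zero _
  rw [deriv_circleMap, hre, smul_eq_mul]
  have h1 : ((r:ℂ) * Complex.exp (θ*I)) ^ (-(j+1)) =
      (r:ℂ)^(-(j+1)) * Complex.exp ((-(j+1)) * (θ*I)) := by
    rw [mul_zpow, ← Complex.exp_int_mul]; norm_cast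
  rw [h1]
  have h2 : (r:ℂ) * (r:ℂ)^(-(j+1)) = (r:ℂ)^(-j) := by
    rw [← zpow_one_add₀ hrc]; norm_num
  have h3 : Complex.exp (θ*I) * Complex.exp ((-(j+1)) * (θ*I)) = Complex.exp (-(j*θ)*I) := by
    rw [← Complex.exp_add]; congr 1; push_cast; ring
  calc (r:ℂ) * Complex.exp (θ*I) * I *
        (Fc ((r:ℂ) * Complex.exp (θ*I)) * ((r:ℂ)^(-(j+1)) * Complex.exp ((-(j+1)) * (θ*I))))
      = (I * ((r:ℂ) * (r:ℂ)^(-(j+1)))) * (Fc ((r:ℂ) * Complex.exp (θ*I)) *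
          (Complex.exp (θ*I) * Complex.exp ((-(j+1)) * (θ*I)))) := by ring
    _ = _ := by rw [h2, h3]

lemma intK_bound (ρ M : ℝ) (hρ : 1 < ρ) (f : ℂ → ℂ)
    (hf : AnalyticOnNhd ℂ f (bernsteinClosed ρ))
    (hM : ∀ z ∈ bernsteinClosed ρ, ‖f z‖ ≤ M) (j : ℤ) (hj : 0 ≤ j) :
    ‖∫ θ in (0:ℝ)..2*Real.pi,
      f ((Complex.exp (θ*I) + (Complex.exp (θ*I))⁻¹)/2) * Complex.exp (-(j*θ)*I)‖
      ≤ 2 * Real.pi * M * ρ ^ (-j) := by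
  set Fc : ℂ → ℂ := fun w => f ((w + w⁻¹)/2) with hFc
  have hρ0 : (0:ℝ) < ρ := by linarith
  -- differentiability on the closed annulus
  have hdiff : ∀ w : ℂ, 1 ≤ ‖w‖ → ‖w‖ ≤ ρ →
      DifferentiableAt ℂ (fun w => Fc w * w ^ (-(j+1))) w := by
    intro w h1 h2
    have hw0 : w ≠ 0 := by intro h; rw [h, norm_zero] at h1; linarith
    have hφ : DifferentiableAt ℂ (fun w : ℂ => (w + w⁻¹)/2) w :=
      ((differentiableAt_id.add (differentiableAt_inv hw0)).div_const 2)
    have hfd : DifferentiableAt ℂ f ((w + w⁻¹)/2) :=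
      (hf _ (memB ρ w h1 h2)).differentiableAt
    exact (hfd.comp w hφ).mul (differentiableAt_zpow.mpr (Or.inl hw0))
  have hann : ∀ w ∈ Metric.closedBall (0:ℂ) ρ \ Metric.ball (0:ℂ) 1,
      DifferentiableAt ℂ (fun w => Fc w * w ^ (-(j+1))) w := by
    intro w hw
    rw [Set.mem_diff, Metric.mem_closedBall, Metric.mem_ball, dist_zero_right, not_lt] at hw
    exact hdiff w hw.2 hw.1
  -- equality of circle integrals
  have heq : (∮ z in C(0, ρ), Fc z * z ^ (-(j+1))) = ∮ z in C(0, 1), Fc z * z ^ (-(j+1)) := by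
    refine circleIntegral_eq_of_differentiable_on_annulus_off_countable one_pos hρ.le
      Set.countable_empty (fun w hw => (hann w hw).continuousAt.continuousWithinAt)
      fun w hw => hann w ?_
    rcases hw with ⟨⟨hw1, hw2⟩, -⟩
    exact ⟨Metric.ball_subset_closedBall hw1, fun h => hw2 (Metric.ball_subset_closedBall h)⟩
  -- bound at radius ρ
  have hb : ‖(∮ z in C(0, ρ), Fc z * z ^ (-(j+1)))‖ ≤ 2 * Real.pi * ρ * (M * ρ ^ (-(j+1))) := by
    refine circleIntegral.norm_integral_le_of_norm_le_const hρ0.le fun z hz => ?_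
    rw [Metric.mem_sphere, dist_zero_right] at hz
    have h1 : (1:ℝ) ≤ ‖z‖ := by rw [hz]; linarith
    have h2 : ‖z‖ ≤ ρ := hz.le
    have : ‖z ^ (-(j+1))‖ = ρ ^ (-(j+1)) := by rw [norm_zpow, hz]
    rw [norm_mul, this]
    exact mul_le_mul_of_nonneg_right (hM _ (memB ρ z h1 h2))
      (zpow_nonneg hρ0.le _)
  -- evaluate at radius 1
  have h1eval := circleInt_eval Fc j 1 one_pos
  have h1s : (∮ z in C(0, (1:ℝ)), Fc z * z ^ (-(j+1))) =
      I * ∫ θ in (0:ℝ)..2*Real.pi,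
        f ((Complex.exp (θ*I) + (Complex.exp (θ*I))⁻¹)/2) * Complex.exp (-(j*θ)*I) := by
    rw [h1eval]
    norm_num
    rfl
  have habs : ‖I * ∫ θ in (0:ℝ)..2*Real.pi,
        f ((Complex.exp (θ*I) + (Complex.exp (θ*I))⁻¹)/2) * Complex.exp (-(j*θ)*I)‖
      ≤ 2 * Real.pi * ρ * (M * ρ ^ (-(j+1))) := by
    rw [← h1s, ← heq]
    exact hb
  rw [norm_mul, Complex.norm_I, one_mul] at habs
  calc ‖_‖ ≤ 2 * Real.pi * ρ * (M * ρ ^ (-(j+1))) := habs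
    _ = 2 * Real.pi * M * (ρ ^ (-(j+1)) * ρ) := by ring
    _ = 2 * Real.pi * M * ρ ^ (-j) := by
        rw [← zpow_add_one₀ hρ0.ne']
        norm_num

lemma half_int {h : ℝ → ℂ} (hc : Continuous h) (hs : ∀ θ, h (2*Real.pi - θ) = h θ) :
    (∫ θ in (0:ℝ)..2*Real.pi, h θ) = 2 * ∫ θ in (0:ℝ)..Real.pi, h θ := by
  have h1 : (∫ θ in (0:ℝ)..Real.pi, h θ) + (∫ θ in Real.pi..2*Real.pi, h θ)
      = ∫ θ in (0:ℝ)..2*Real.pi, h θ :=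
    intervalIntegral.integral_add_adjacent_intervals
      (hc.intervalIntegrable _ _) (hc.intervalIntegrable _ _)
  have h2 : (∫ θ in Real.pi..2*Real.pi, h θ) = ∫ θ in (0:ℝ)..Real.pi, h θ := by
    have h3 := intervalIntegral.integral_comp_sub_left (a := (0:ℝ)) (b := Real.pi) h (2*Real.pi)
    rw [show 2*Real.pi - Real.pi = Real.pi by ring, sub_zero] at h3
    rw [← h3]
    exact intervalIntegral.integral_congr fun θ _ => (hs θ)
  rw [← h1, h2]; ring

lemma shift_int {h : ℝ → ℂ} (hper : ∀ θ, h (θ - 2*Real.pi) = h θ) :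
    (∫ θ in (0:ℝ)..2*Real.pi, h (-θ)) = ∫ θ in (0:ℝ)..2*Real.pi, h θ := by
  rw [intervalIntegral.integral_comp_neg (a := (0:ℝ)) (b := 2*Real.pi)]
  rw [neg_zero]
  have h3 := intervalIntegral.integral_comp_sub_right (a := (0:ℝ)) (b := 2*Real.pi) h (2*Real.pi)
  rw [show 2*Real.pi - 2*Real.pi = 0 by ring, zero_sub] at h3
  rw [← h3]
  exact intervalIntegral.integral_congr fun θ _ => (hper θ)

set_option maxHeartbeats 2000000 in
/-- Truncation error of the Chebyshev expansion for a function analytic on the closed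
interior of the Bernstein ellipse `E_ρ` and bounded there by `M`:
`|f(x) - Σ_{j=0}^n aⱼ Tⱼ(x)| ≤ 2 M ρ^{-n}/(ρ - 1)` for `x ∈ [-1,1]`. -/
theorem chebyshev_truncation_error (ρ : ℝ) (hρ : 1 < ρ) (f : ℂ → ℂ) (M : ℝ)
    (hf : AnalyticOnNhd ℂ f (bernsteinClosed ρ))
    (hM : ∀ z ∈ bernsteinClosed ρ, ‖f z‖ ≤ M)
    (n : ℕ) (x : ℝ) (hx : x ∈ Set.Icc (-1 : ℝ) 1) :
    ‖f (x : ℂ) - ∑ j ∈ Finset.range (n + 1),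
        chebCoeff f j * (Polynomial.Chebyshev.T ℂ (j : ℤ)).eval (x : ℂ)‖
      ≤ 2 * M * ρ ^ (-(n : ℤ)) / (ρ - 1) := by
  have hπ : (0:ℝ) < Real.pi := Real.pi_pos
  have hπc : (Real.pi : ℂ) ≠ 0 := Complex.ofReal_ne_zero.mpr Real.pi_ne_zero
  haveI : Fact (0 < 2*Real.pi) := ⟨by linarith⟩
  have hρ0 : (0:ℝ) < ρ := by linarith
  set G : ℝ → ℂ := fun θ => f ((Real.cos θ : ℝ) : ℂ) with hG
  have hcoseq : ∀ θ : ℝ, ((Real.cos θ : ℝ) : ℂ)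
      = (Complex.exp (θ*I) + (Complex.exp (θ*I))⁻¹)/2 := by
    intro θ
    rw [Complex.ofReal_cos, Complex.cos, ← Complex.exp_neg]
    ring_nf
  have hcosmem : ∀ θ : ℝ, ((Real.cos θ : ℝ) : ℂ) ∈ bernsteinClosed ρ := by
    intro θ
    have h1 : ‖Complex.exp (θ*I)‖ = 1 := Complex.norm_exp_ofReal_mul_I θ
    have h2 := memB ρ (Complex.exp (θ*I)) (by rw [h1]) (by rw [h1]; linarith)
    rw [hcoseq θ]; exact h2
  have hGcont : Continuous G := by
    rw [continuous_iff_continuousAt]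
    intro θ
    have hin : ContinuousAt (fun θ:ℝ => ((Real.cos θ:ℝ):ℂ)) θ := by fun_prop
    exact ContinuousAt.comp (g := f) (f := fun θ:ℝ => ((Real.cos θ:ℝ):ℂ))
      ((hf _ (hcosmem θ)).continuousAt) hin
  have hGper : Function.Periodic G (2*Real.pi) := fun θ => by
    simp only [hG]
    rw [Real.cos_add_two_pi]
  set g : C(AddCircle (2*Real.pi), ℂ) := ⟨hGper.lift, continuous_coinduced_dom.mpr hGcont⟩ with hg
  set c : ℤ → ℂ := fourierCoeff (⇑g) with hcdef
  -- interval-integral formula for the Fourier coefficients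
  have hc : ∀ j : ℤ, c j = ((1/(2*Real.pi) : ℝ) : ℂ) *
      ∫ θ in (0:ℝ)..2*Real.pi, G θ * Complex.exp (-(j*θ)*I) := by
    intro j
    rw [hcdef, fourierCoeff_eq_intervalIntegral _ j 0, zero_add, Complex.real_smul]
    push_cast
    congr 1
    refine intervalIntegral.integral_congr fun θ _ => ?_
    have h1 : (⇑g) ((θ : ℝ) : AddCircle (2*Real.pi)) = G θ := hGper.lift_coe θ
    rw [h1, smul_eq_mul, mul_comm]
    congr 1
    rw [fourier_coe_apply]
    congr 1
    push_cast
    field_simp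
  -- continuity of integrands
  have hcont : ∀ j : ℤ, Continuous (fun θ : ℝ => G θ * Complex.exp (-(j*θ)*I)) := by
    intro j
    exact hGcont.mul ((Complex.continuous_exp).comp (by fun_prop))
  -- symmetry
  have hsym : ∀ j : ℤ, c (-j) = c j := by
    intro j
    rw [hc, hc]
    congr 1
    set h : ℝ → ℂ := fun θ => G θ * Complex.exp (-(j*θ)*I) with hh
    have hper : ∀ θ, h (θ - 2*Real.pi) = h θ := by
      intro θ
      simp only [hh]
      rw [hGper.sub_eq θ]
      congr 1
      have : Complex.exp (-(j*(θ - 2*Real.pi):ℂ)*I)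
          = Complex.exp (-(j*θ)*I) * Complex.exp (j*(2*Real.pi*I)) := by
        rw [← Complex.exp_add]; congr 1; push_cast; ring
      rw [show ((θ:ℂ) - 2*Real.pi) = ((θ - 2*Real.pi : ℝ) : ℂ) by push_cast; ring] at this
      rw [this, Complex.exp_int_mul_two_pi_mul_I, mul_one]
    calc (∫ θ in (0:ℝ)..2*Real.pi, G θ * Complex.exp (-((-j:ℤ)*θ)*I))
        = ∫ θ in (0:ℝ)..2*Real.pi, h (-θ) := by
          refine intervalIntegral.integral_congr fun θ _ => ?_
          simp only [hh]
          rw [show G (-θ) = G θ by simp [hG, Real.cos_neg]]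
          congr 2
          push_cast
          ring
      _ = ∫ θ in (0:ℝ)..2*Real.pi, h θ := shift_int hper
  -- coefficient bound
  have hcb : ∀ k : ℕ, ‖c (k:ℤ)‖ ≤ M * (ρ⁻¹)^k := by
    intro k
    have hKb := intK_bound ρ M hρ f hf hM (k:ℤ) (by positivity)
    have hKeq : (∫ θ in (0:ℝ)..2*Real.pi,
          f ((Complex.exp (θ*I) + (Complex.exp (θ*I))⁻¹)/2) * Complex.exp (-((k:ℤ)*θ)*I))
        = ∫ θ in (0:ℝ)..2*Real.pi, G θ * Complex.exp (-((k:ℤ)*θ)*I) := by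
      refine intervalIntegral.integral_congr fun θ _ => ?_
      rw [hG]; simp only []
      rw [hcoseq θ]
    rw [hc, norm_mul, Complex.norm_real, Real.norm_eq_abs, abs_of_pos (by positivity), ← hKeq]
    calc (1/(2*Real.pi)) * ‖_‖
        ≤ (1/(2*Real.pi)) * (2 * Real.pi * M * ρ ^ (-(k:ℤ))) := by
          apply mul_le_mul_of_nonneg_left hKb (by positivity)
      _ = M * (ρ⁻¹)^k := by
          rw [zpow_neg, zpow_natCast, ← inv_pow]
          field_simp
  have hM0 : 0 ≤ M := le_trans (norm_nonneg _) (hM _ (hcosmem 0))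
  have hinv1 : ρ⁻¹ < 1 := by
    rw [inv_lt_one_iff₀]; right; exact hρ
  have hinv0 : (0:ℝ) ≤ ρ⁻¹ := by positivity
  have hgeo : Summable (fun k : ℕ => M * (ρ⁻¹)^k) :=
    (summable_geometric_of_lt_one hinv0 hinv1).mul_left M
  have hsummN : Summable (fun k : ℕ => c (k:ℤ)) := by
    refine Summable.of_norm_bounded hgeo fun k => ?_
    exact hcb k
  have hsummZ : Summable c :=
    Summable.of_nat_of_neg hsummN (hsummN.congr fun k => (hsym k).symm)
  -- pointwise convergence of the Fourier series
  set θ₀ := Real.arccos x with hθ₀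
  have hcosθ₀ : Real.cos θ₀ = x := Real.cos_arccos hx.1 hx.2
  have hsum := has_pointwise_sum_fourier_series_of_summable hsummZ
      ((θ₀ : ℝ) : AddCircle (2*Real.pi))
  have hgθ₀ : g ((θ₀ : ℝ) : AddCircle (2*Real.pi)) = f ((x:ℝ):ℂ) := by
    simp only [hg, ContinuousMap.coe_mk]
    rw [hGper.lift_coe θ₀, hG]
    simp only []
    rw [hcosθ₀]
  rw [hgθ₀] at hsum
  have hnat := hsum.nat_add_neg
  -- fourier evaluation
  have hfour : ∀ i : ℤ, (fourier i ((θ₀:ℝ) : AddCircle (2*Real.pi)) : ℂ)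
      = Complex.exp (((i:ℂ)*θ₀)*I) := by
    intro i
    rw [fourier_coe_apply]
    push_cast
    congr 1
    field_simp
  have hGsym2π : ∀ θ : ℝ, G (2*Real.pi - θ) = G θ := by
    intro θ
    simp only [hG]
    have h2 : Real.cos (2*Real.pi - θ) = Real.cos θ := by
      rw [Real.cos_sub, Real.cos_two_pi, Real.sin_two_pi]
      ring
    rw [h2]
  -- chebCoeff 0
  have hch0 : chebCoeff f 0 = c 0 := by
    rw [hc 0]
    rw [show (∫ θ in (0:ℝ)..2*Real.pi, G θ * Complex.exp (-(((0:ℤ):ℂ)*(θ:ℂ))*I))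
        = ∫ θ in (0:ℝ)..2*Real.pi, G θ from
      intervalIntegral.integral_congr fun θ _ => by norm_num]
    rw [half_int hGcont hGsym2π]
    show ((1 / Real.pi : ℝ) : ℂ) * ∫ θ in (0:ℝ)..Real.pi, G θ = _
    push_cast
    field_simp
  -- chebCoeff successor
  have hchS : ∀ k : ℕ, chebCoeff f (k+1) = 2 * c ((k:ℤ)+1) := by
    intro k
    have e1 : 2 * c ((k:ℤ)+1) = c ((k:ℤ)+1) + c (-((k:ℤ)+1)) := by rw [hsym]; ring
    rw [e1, hc, hc, ← mul_add,
      ← intervalIntegral.integral_add ((hcont _).intervalIntegrable _ _)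
        ((hcont _).intervalIntegrable _ _)]
    have e2 : (∫ θ in (0:ℝ)..2*Real.pi, (G θ * Complex.exp (-(((((k:ℤ)+1):ℤ):ℂ)*θ)*I)
          + G θ * Complex.exp (-((((-((k:ℤ)+1)):ℤ):ℂ)*θ)*I)))
        = 2 * ∫ θ in (0:ℝ)..2*Real.pi, G θ * ((Real.cos ((k+1)*θ) : ℝ) : ℂ) := by
      rw [← intervalIntegral.integral_const_mul]
      refine intervalIntegral.integral_congr fun θ _ => ?_
      have e3 : (2:ℂ) * (G θ * ((Real.cos ((k+1)*θ) : ℝ) : ℂ))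
          = G θ * (Complex.exp (-(((k:ℂ)+1)*θ)*I) + Complex.exp ((((k:ℂ)+1)*θ)*I)) := by
        rw [Complex.ofReal_cos, Complex.cos]
        push_cast
        ring_nf
      rw [e3]
      congr 2 <;> (push_cast; ring)
    rw [e2]
    have hh : Continuous (fun θ : ℝ => G θ * ((Real.cos ((k+1)*θ) : ℝ) : ℂ)) := by
      apply hGcont.mul
      fun_prop
    have hhs : ∀ θ : ℝ, G (2*Real.pi - θ) * ((Real.cos ((k+1)*(2*Real.pi - θ)) : ℝ) : ℂ)
        = G θ * ((Real.cos ((k+1)*θ) : ℝ) : ℂ) := by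
      intro θ
      rw [hGsym2π θ]
      congr 2
      have h4 := Real.cos_int_mul_two_pi_sub (((k:ℝ)+1)*θ) ((k:ℤ)+1)
      push_cast at h4 ⊢
      rw [← h4]
      congr 1
      ring
    rw [half_int hh hhs]
    show ((2 / Real.pi : ℝ) : ℂ) * ∫ θ in (0:ℝ)..Real.pi,
        G θ * ((Real.cos ((k+1)*θ) : ℝ) : ℂ) = _
    push_cast
    field_simp
  -- Chebyshev evaluation
  have hT : ∀ k : ℕ, (Polynomial.Chebyshev.T ℂ (k:ℤ)).eval ((x:ℝ):ℂ)
      = Complex.cos ((k:ℂ)*θ₀) := by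
    intro k
    have hxc : ((x:ℝ):ℂ) = Complex.cos (θ₀:ℂ) := by
      rw [← Complex.ofReal_cos, hcosθ₀]
    rw [hxc, Polynomial.Chebyshev.T_complex_cos]
    norm_num
  have hterm : ∀ k : ℕ, c (k:ℤ) • (fourier (k:ℤ) ((θ₀:ℝ):AddCircle (2*Real.pi)) : ℂ)
        + c (-(k:ℤ)) • (fourier (-(k:ℤ)) ((θ₀:ℝ):AddCircle (2*Real.pi)) : ℂ)
      = chebCoeff f k * (Polynomial.Chebyshev.T ℂ (k:ℤ)).eval ((x:ℝ):ℂ)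
        + (if k = 0 then c 0 else 0) := by
    intro k
    rw [hsym, smul_eq_mul, smul_eq_mul, hfour, hfour, hT]
    cases k with
    | zero =>
      simp [hch0]
    | succ m =>
      rw [hchS m, if_neg (Nat.succ_ne_zero m), Complex.cos]
      push_cast
      ring_nf
  have hU : HasSum (fun k : ℕ => chebCoeff f k *
      (Polynomial.Chebyshev.T ℂ (k:ℤ)).eval ((x:ℝ):ℂ)) (f ((x:ℝ):ℂ)) := by
    have h1 : HasSum (fun k : ℕ => chebCoeff f k *
        (Polynomial.Chebyshev.T ℂ (k:ℤ)).eval ((x:ℝ):ℂ) + (if k = 0 then c 0 else 0))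
        (f ((x:ℝ):ℂ) + c 0) := by
      have h2 := hnat
      rw [fourier_zero, smul_eq_mul, mul_one] at h2
      exact (funext hterm) ▸ h2
    have h3 := h1.sub (hasSum_ite_eq 0 (c 0))
    simpa using h3
  -- bound on each coefficient
  have hAb : ∀ k : ℕ, ‖chebCoeff f k‖ ≤ 2*M*(ρ⁻¹)^k := by
    intro k
    cases k with
    | zero =>
      rw [hch0]
      have := hcb 0
      simp only [pow_zero, mul_one] at this ⊢
      push_cast at this
      linarith
    | succ m =>
      rw [hchS m, norm_mul, RCLike.norm_two]
      have h6 := hcb (m+1)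
      push_cast at h6
      calc 2 * ‖c ((m:ℤ)+1)‖ ≤ 2 * (M * (ρ⁻¹)^(m+1)) := by linarith
        _ = 2*M*(ρ⁻¹)^(m+1) := by ring
  have hub : ∀ k : ℕ, ‖chebCoeff f k * (Polynomial.Chebyshev.T ℂ (k:ℤ)).eval ((x:ℝ):ℂ)‖
      ≤ 2*M*(ρ⁻¹)^k := by
    intro k
    rw [hT k, norm_mul]
    have hcos : ‖Complex.cos ((k:ℂ)*θ₀)‖ ≤ 1 := by
      rw [show ((k:ℂ)*θ₀) = ((k*θ₀ : ℝ) : ℂ) by push_cast; ring, ← Complex.ofReal_cos,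
        Complex.norm_real]
      exact Real.abs_cos_le_one _
    calc ‖chebCoeff f k‖ * ‖Complex.cos ((k:ℂ)*θ₀)‖ ≤ ‖chebCoeff f k‖ * 1 := by
          have : (0:ℝ) ≤ ‖chebCoeff f k‖ := norm_nonneg _
          exact mul_le_mul_of_nonneg_left hcos this
      _ = ‖chebCoeff f k‖ := mul_one _
      _ ≤ 2*M*(ρ⁻¹)^k := by exact hAb k
  have hgeo2 : Summable (fun k : ℕ => 2*M*(ρ⁻¹)^k) :=
    (summable_geometric_of_lt_one hinv0 hinv1).mul_left _
  have hgeo2t : Summable (fun i : ℕ => 2*M*(ρ⁻¹)^(i+(n+1))) :=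
    (summable_nat_add_iff (n+1)).mpr hgeo2
  have hnsummable : Summable (fun i : ℕ => ‖chebCoeff f (i+(n+1)) *
      (Polynomial.Chebyshev.T ℂ ((i+(n+1):ℕ):ℤ)).eval ((x:ℝ):ℂ)‖) :=
    Summable.of_nonneg_of_le (fun i => norm_nonneg _) (fun i => hub (i+(n+1))) hgeo2t
  have key : f ((x:ℝ):ℂ) - (∑ j ∈ Finset.range (n+1), chebCoeff f j *
        (Polynomial.Chebyshev.T ℂ (j:ℤ)).eval ((x:ℝ):ℂ))
      = ∑' i : ℕ, chebCoeff f (i+(n+1)) *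
        (Polynomial.Chebyshev.T ℂ ((i+(n+1):ℕ):ℤ)).eval ((x:ℝ):ℂ) := by
    have h4 := Summable.sum_add_tsum_nat_add (f := fun k => chebCoeff f k *
      (Polynomial.Chebyshev.T ℂ (k:ℤ)).eval ((x:ℝ):ℂ)) (n+1) hU.summable
    rw [hU.tsum_eq] at h4
    exact (sub_eq_iff_eq_add').mpr h4.symm
  rw [key]
  have hnorm : ‖∑' i : ℕ, chebCoeff f (i+(n+1)) *
        (Polynomial.Chebyshev.T ℂ ((i+(n+1):ℕ):ℤ)).eval ((x:ℝ):ℂ)‖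
      ≤ ∑' i : ℕ, 2*M*(ρ⁻¹)^(i+(n+1)) := by
    refine (norm_tsum_le_tsum_norm hnsummable).trans
      (Summable.tsum_le_tsum (fun i => hub (i+(n+1))) hnsummable hgeo2t)
  have hts : (∑' i : ℕ, 2*M*(ρ⁻¹)^(i+(n+1))) = 2*M*((ρ⁻¹)^(n+1) * (1-ρ⁻¹)⁻¹) := by
    have h7 : ∀ i:ℕ, 2*M*(ρ⁻¹)^(i+(n+1)) = (ρ⁻¹)^i * (2*M*(ρ⁻¹)^(n+1)) := by
      intro i; rw [pow_add]; ring
    rw [tsum_congr h7, tsum_mul_right, tsum_geometric_of_lt_one hinv0 hinv1]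
    ring
  rw [hts] at hnorm
  have hone : (1:ℝ) - ρ⁻¹ ≠ 0 := by
    have : ρ⁻¹ < 1 := hinv1
    linarith
  have hρ1 : ρ - 1 ≠ 0 := by linarith
  have hfin : 2*M*((ρ⁻¹)^(n+1) * (1-ρ⁻¹)⁻¹) = 2*M*ρ^(-(n:ℤ))/(ρ-1) := by
    rw [zpow_neg, zpow_natCast, ← inv_pow, pow_succ]
    field_simp
  rw [← hfin]
  exact hnorm
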